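/- Let λ > 0, σ > 0 and a ∈ ℝ. Then ∫₀^∞ x^{−1/2} exp(−λ²x/2 − a²/(2σ²x)) dx = (√(2π)/λ) · exp(−λ|a|/σ). -/

import Mathlib

open Real MeasureTheory Set

lemma image_inv_mul (c : ℝ) (hc : 0 < c) : (fun t : ℝ => c / t) '' Ioi 0 = Ioi 0 := by
  ext x
  constructor
  · rintro ⟨t, ht, rfl⟩
    exact div_pos hc ht
  · intro hx
    exact ⟨c / x, div_pos hc hx, by field_simp⟩

lemma image_sq : (fun t : ℝ => t ^ 2) '' Ioi 0 = Ioi 0 := by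
  ext x
  constructor
  · rintro ⟨t, ht, rfl⟩
    exact pow_pos (mem_Ioi.mp ht) 2
  · intro hx
    exact ⟨Real.sqrt x, Real.sqrt_pos.2 hx, Real.sq_sqrt (le_of_lt hx)⟩

lemma image_glasser (c : ℝ) (hc : 0 < c) : (fun t : ℝ => t - c / t) '' Ioi 0 = univ := by
  apply eq_univ_of_forall
  intro u
  set s := Real.sqrt (u ^ 2 + 4 * c) with hs
  have hs2 : s ^ 2 = u ^ 2 + 4 * c := Real.sq_sqrt (by positivity)
  have hsu : |u| < s := by
    nlinarith [abs_nonneg u, Real.sqrt_nonneg (u ^ 2 + 4 * c), sq_abs u]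
  have ht : 0 < (u + s) / 2 := by
    have := neg_abs_le u; linarith
  refine ⟨(u + s) / 2, ht, ?_⟩
  have h2 : ((u + s) / 2) ^ 2 = u * ((u + s) / 2) + c := by nlinarith
  have h3 : c / ((u + s) / 2) = (u + s) / 2 - u := by
    rw [div_eq_iff ht.ne']; nlinarith
  show (u + s) / 2 - c / ((u + s) / 2) = u
  rw [h3]; ring

lemma glasser_deriv (c : ℝ) : ∀ t ∈ Ioi (0:ℝ),
    HasDerivWithinAt (fun t : ℝ => t - c / t) (1 + c / t ^ 2) (Ioi 0) t := by
  intro t ht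
  have ht' : (t : ℝ) ≠ 0 := ne_of_gt ht
  have h := (hasDerivAt_id t).sub ((hasDerivAt_inv ht').const_mul c)
  have h2 : (id - fun t : ℝ => c * t⁻¹) = fun t : ℝ => t - c / t := by
    funext x; simp [div_eq_mul_inv]
  rw [h2] at h
  refine h.hasDerivWithinAt.congr_deriv ?_
  field_simp
  try ring

lemma glasser_inj (c : ℝ) (hc : 0 < c) : InjOn (fun t : ℝ => t - c / t) (Ioi 0) := by
  apply StrictMonoOn.injOn
  intro x hx y hy hxy
  have : c / y < c / x := div_lt_div_of_pos_left hc hx hxy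
  dsimp; linarith

lemma inv_deriv (c : ℝ) : ∀ t ∈ Ioi (0:ℝ),
    HasDerivWithinAt (fun t : ℝ => c / t) (-(c / t ^ 2)) (Ioi 0) t := by
  intro t ht
  have ht' : (t : ℝ) ≠ 0 := ne_of_gt ht
  have h := (hasDerivAt_inv ht').const_mul c
  have h2 : (fun t : ℝ => c * t⁻¹) = fun t : ℝ => c / t := by
    funext x; simp [div_eq_mul_inv]
  rw [h2] at h
  refine h.hasDerivWithinAt.congr_deriv ?_
  ring

lemma cdiv_inj (c : ℝ) (hc : 0 < c) : InjOn (fun t : ℝ => c / t) (Ioi 0) := by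
  intro x hx y hy h
  dsimp at h
  rw [div_eq_div_iff (ne_of_gt hx) (ne_of_gt hy)] at h
  exact (mul_left_cancel₀ (ne_of_gt hc) h).symm

lemma g_symm (p c : ℝ) (hc : 0 < c) {t : ℝ} (ht : 0 < t) :
    Real.exp (-(p * (c / t - c / (c / t)) ^ 2)) = Real.exp (-(p * (t - c / t) ^ 2)) := by
  have h : c / (c / t) = t := by field_simp
  rw [h]
  congr 1
  ring

lemma g_integrable (p c : ℝ) (hp : 0 < p) (hc : 0 < c) :
    IntegrableOn (fun t : ℝ => Real.exp (-(p * (t - c / t) ^ 2))) (Ioi 0) := by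
  have hmaj : IntegrableOn (fun t : ℝ => Real.exp (2 * p * c) * Real.exp (-p * t ^ 2)) (Ioi 0) :=
    ((integrable_exp_neg_mul_sq hp).const_mul _).integrableOn
  apply Integrable.mono hmaj
  · apply ContinuousOn.aestronglyMeasurable _ measurableSet_Ioi
    apply Real.continuous_exp.comp_continuousOn
    apply ContinuousOn.neg
    apply ContinuousOn.mul continuousOn_const
    exact (continuousOn_id.sub (continuousOn_const.div continuousOn_id fun t ht => ne_of_gt ht)).pow 2
  · rw [ae_restrict_iff' measurableSet_Ioi]
    filter_upwards with t
    intro ht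
    rw [Real.norm_eq_abs, Real.norm_eq_abs, abs_of_pos (Real.exp_pos _),
      abs_of_pos (by positivity), ← Real.exp_add]
    apply Real.exp_le_exp.2
    have hct : t * (c / t) = c := mul_div_cancel₀ c (ne_of_gt ht)
    nlinarith [sq_nonneg (c / t), mul_le_mul_of_nonneg_left (by nlinarith [sq_nonneg (c/t)] :
      t ^ 2 - 2 * c ≤ (t - c / t) ^ 2) hp.le]

lemma glasser (p c : ℝ) (hp : 0 < p) (hc : 0 < c) :
    ∫ t in Ioi (0:ℝ), Real.exp (-(p * (t - c / t) ^ 2)) = Real.sqrt (π / p) / 2 := by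
  set g : ℝ → ℝ := fun t => Real.exp (-(p * (t - c / t) ^ 2)) with hg
  have hIg : IntegrableOn g (Ioi 0) := g_integrable p c hp hc
  -- integrability of (c/t^2) * g t
  have hIg2 : IntegrableOn (fun t : ℝ => c / t ^ 2 * g t) (Ioi 0) := by
    have h := (integrableOn_image_iff_integrableOn_abs_deriv_smul measurableSet_Ioi
      (inv_deriv c) (cdiv_inj c hc) g).1 (by rwa [image_inv_mul c hc])
    apply h.congr_fun _ measurableSet_Ioi
    intro t ht
    have ht' : (0:ℝ) < t := ht
    simp only [smul_eq_mul, abs_neg]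
    rw [abs_of_pos (show (0:ℝ) < c / t ^ 2 by positivity), hg]
    dsimp only
    rw [g_symm p c hc ht']
  -- reflection identity
  have hrefl : ∫ t in Ioi (0:ℝ), c / t ^ 2 * g t = ∫ t in Ioi (0:ℝ), g t := by
    have h := integral_image_eq_integral_abs_deriv_smul measurableSet_Ioi
      (inv_deriv c) (cdiv_inj c hc) g
    rw [image_inv_mul c hc] at h
    rw [h]
    apply setIntegral_congr_fun measurableSet_Ioi
    intro t ht
    have ht' : (0:ℝ) < t := ht
    simp only [smul_eq_mul, abs_neg]
    rw [abs_of_pos (show (0:ℝ) < c / t ^ 2 by positivity), hg]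
    dsimp only
    rw [g_symm p c hc ht']
  -- main change of variables
  have key := integral_image_eq_integral_abs_deriv_smul measurableSet_Ioi
    (glasser_deriv c) (glasser_inj c hc) (fun u => Real.exp (-(p * u ^ 2)))
  rw [image_glasser c hc, setIntegral_univ] at key
  have hgauss : ∫ u : ℝ, Real.exp (-(p * u ^ 2)) = Real.sqrt (π / p) := by
    simpa [neg_mul] using integral_gaussian p
  have hsplit : ∫ t in Ioi (0:ℝ), |1 + c / t ^ 2| • Real.exp (-(p * (t - c / t) ^ 2))
      = (∫ t in Ioi (0:ℝ), g t) + ∫ t in Ioi (0:ℝ), c / t ^ 2 * g t := by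
    rw [← integral_add hIg hIg2]
    apply setIntegral_congr_fun measurableSet_Ioi
    intro t ht
    have ht' : (0:ℝ) < t := ht
    have hpos : (0:ℝ) < 1 + c / t ^ 2 := by positivity
    simp only [smul_eq_mul, hg]
    rw [abs_of_pos hpos]
    ring
  have h2 : Real.sqrt (π / p) = (∫ t in Ioi (0:ℝ), g t) + ∫ t in Ioi (0:ℝ), g t := by
    rw [← hgauss, key, hsplit, hrefl]
  linarith

lemma subst_sq (f : ℝ → ℝ) :
    ∫ x in Ioi (0:ℝ), x ^ (-(1:ℝ)/2) * f x = ∫ t in Ioi (0:ℝ), 2 * f (t ^ 2) := by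
  have hderiv : ∀ t ∈ Ioi (0:ℝ), HasDerivWithinAt (fun t : ℝ => t ^ 2) (2 * t) (Ioi 0) t := by
    intro t ht
    simpa using (hasDerivAt_pow 2 t).hasDerivWithinAt
  have hinj : InjOn (fun t : ℝ => t ^ 2) (Ioi 0) := by
    intro x hx y hy h
    dsimp at h
    nlinarith [hx.out, hy.out]
  have h := integral_image_eq_integral_abs_deriv_smul measurableSet_Ioi hderiv hinj
    (fun x => x ^ (-(1:ℝ)/2) * f x)
  rw [image_sq] at h
  rw [h]
  apply setIntegral_congr_fun measurableSet_Ioi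
  intro t ht
  have ht' : (0:ℝ) < t := ht
  have hr : ((t ^ 2 : ℝ)) ^ (-(1:ℝ)/2) = t⁻¹ := by
    rw [← Real.rpow_natCast t 2, ← Real.rpow_mul ht'.le]
    norm_num [Real.rpow_neg_one]
  simp only [smul_eq_mul, hr, abs_of_pos (by linarith : (0:ℝ) < 2 * t)]
  field_simp

/-- `∫₀^∞ x^{−1/2} exp(−λ²x/2 − a²/(2σ²x)) dx = (√(2π)/λ) exp(−λ|a|/σ)`. -/
theorem integral_invGaussian_reciprocal_kernel (lam σ a : ℝ) (hlam : 0 < lam)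
    (hσ : 0 < σ) :
    ∫ x in Set.Ioi (0 : ℝ),
        x ^ (-(1 : ℝ) / 2) * Real.exp (-(lam ^ 2 * x) / 2 - a ^ 2 / (2 * σ ^ 2 * x))
      = Real.sqrt (2 * π) / lam * Real.exp (-(lam * |a|) / σ) := by
  have hp : (0:ℝ) < lam ^ 2 / 2 := by positivity
  have hsq : Real.sqrt (π / (lam ^ 2 / 2)) = Real.sqrt (2 * π) / lam := by
    rw [show π / (lam ^ 2 / 2) = 2 * π / lam ^ 2 by ring,
      Real.sqrt_div (by positivity) (lam ^ 2), Real.sqrt_sq hlam.le]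
  rw [subst_sq]
  rcases eq_or_ne a 0 with rfl | ha
  · simp only [abs_zero, mul_zero, ne_eq, OfNat.ofNat_ne_zero, not_false_eq_true, zero_pow,
      zero_div, sub_zero, neg_zero, Real.exp_zero, mul_one]
    have h0 : ∀ t ∈ Ioi (0:ℝ), 2 * Real.exp (-(lam ^ 2 * t ^ 2) / 2)
        = 2 * Real.exp (-(lam ^ 2 / 2) * t ^ 2) := by
      intro t _
      congr 2
      ring
    rw [setIntegral_congr_fun measurableSet_Ioi h0, MeasureTheory.integral_const_mul,
      integral_gaussian_Ioi, hsq]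
    ring
  · set c : ℝ := |a| / (lam * σ) with hcdef
    have hc : 0 < c := by positivity
    have hexp : ∀ t ∈ Ioi (0:ℝ), 2 * Real.exp (-(lam ^ 2 * t ^ 2) / 2 - a ^ 2 / (2 * σ ^ 2 * t ^ 2))
        = (2 * Real.exp (-(lam * |a|) / σ)) * Real.exp (-(lam ^ 2 / 2 * (t - c / t) ^ 2)) := by
      intro t ht
      have ht' : (0:ℝ) < t := ht
      conv_rhs => rw [mul_assoc, ← Real.exp_add]
      congr 2
      have h1 : |a| ^ 2 = a ^ 2 := sq_abs a
      rw [hcdef]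
      field_simp
      linear_combination h1
    rw [setIntegral_congr_fun measurableSet_Ioi hexp, integral_const_mul,
      glasser (lam ^ 2 / 2) c hp hc, hsq]
    ring
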